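/- The pure homotopy braid group P̂₃, i.e., the subgroup of the homotopy braid group B̂₃ generated by b₁₂, b₁₃, b₂₃, is torsion-free: if g ∈ P̂₃ and gⁿ = 1 for some integer n ≥ 1, then g = 1. -/

import Mathlib

/-- The commutator `[x, y] = x⁻¹ y⁻¹ x y` used in the paper. -/
def pcomm {G : Type*} [Group G] (x y : G) : G := x⁻¹ * y⁻¹ * x * y

/-- The braid relation `σ₁σ₂σ₁ = σ₂σ₁σ₂` on two generators. -/
def braidRel3 : Set (FreeGroup (Fin 2)) :=
  { FreeGroup.of 0 * FreeGroup.of 1 * FreeGroup.of 0 *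
      (FreeGroup.of 1 * FreeGroup.of 0 * FreeGroup.of 1)⁻¹ }

/-- The braid group `B₃`. -/
abbrev B3 := PresentedGroup braidRel3

/-- The generator `σ₁` of `B₃`. -/
def s1 : B3 := PresentedGroup.of 0
/-- The generator `σ₂` of `B₃`. -/
def s2 : B3 := PresentedGroup.of 1
/-- `a₁₂ = σ₁²`. -/
def a12 : B3 := s1 ^ 2
/-- `a₁₃ = σ₂σ₁²σ₂⁻¹`. -/
def a13 : B3 := s2 * s1 ^ 2 * s2⁻¹
/-- `a₂₃ = σ₂²`. -/
def a23 : B3 := s2 ^ 2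

/-- The homotopy relations in `B₃`: `[a₁₃, g⁻¹a₁₃g]` and `[a₂₃, g⁻¹a₂₃g]` for `g`
in the subgroup generated by `a₁₃` and `a₂₃`. -/
def homotopyRels3 : Set B3 :=
  { x | ∃ g ∈ Subgroup.closure {a13, a23},
        x = pcomm a13 (g⁻¹ * a13 * g) ∨ x = pcomm a23 (g⁻¹ * a23 * g) }

/-- The homotopy braid group `B̂₃`. -/
abbrev HB3 := B3 ⧸ Subgroup.normalClosure homotopyRels3

/-- The canonical projection `B₃ → B̂₃`. -/
def pr : B3 →* HB3 := QuotientGroup.mk' _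

/-- The image of `σ₁` in `B̂₃`. -/
def t1 : HB3 := pr s1
/-- The image of `σ₂` in `B̂₃`. -/
def t2 : HB3 := pr s2
/-- The image `b₁₂` of `a₁₂` in `B̂₃`. -/
def b12 : HB3 := pr a12
/-- The image `b₁₃` of `a₁₃` in `B̂₃`. -/
def b13 : HB3 := pr a13
/-- The image `b₂₃` of `a₂₃` in `B̂₃`. -/
def b23 : HB3 := pr a23
/-- `z = [b₂₃, b₁₃]`. -/
def zz : HB3 := pcomm b23 b13


section TTring
@[ext] structure TT where
  a : ℤ
  b : ℤ
  c : ℤ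
deriving DecidableEq
namespace TT
instance : Zero TT := ⟨⟨0,0,0⟩⟩
instance : One TT := ⟨⟨1,0,0⟩⟩
instance : Add TT := ⟨fun x y => ⟨x.a+y.a, x.b+y.b, x.c+y.c⟩⟩
instance : Neg TT := ⟨fun x => ⟨-x.a, -x.b, -x.c⟩⟩
instance : Sub TT := ⟨fun x y => ⟨x.a-y.a, x.b-y.b, x.c-y.c⟩⟩
instance : Mul TT := ⟨fun x y => ⟨x.a*y.a, x.a*y.b + x.b*y.a, x.a*y.c + x.b*y.b + x.c*y.a⟩⟩
@[simp] lemma add_a (x y : TT) : (x+y).a = x.a+y.a := rfl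
@[simp] lemma add_b (x y : TT) : (x+y).b = x.b+y.b := rfl
@[simp] lemma add_c (x y : TT) : (x+y).c = x.c+y.c := rfl
@[simp] lemma mul_a (x y : TT) : (x*y).a = x.a*y.a := rfl
@[simp] lemma mul_b (x y : TT) : (x*y).b = x.a*y.b + x.b*y.a := rfl
@[simp] lemma mul_c (x y : TT) : (x*y).c = x.a*y.c + x.b*y.b + x.c*y.a := rfl
@[simp] lemma neg_a (x : TT) : (-x).a = -x.a := rfl
@[simp] lemma neg_b (x : TT) : (-x).b = -x.b := rfl
@[simp] lemma neg_c (x : TT) : (-x).c = -x.c := rfl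
@[simp] lemma sub_a (x y : TT) : (x-y).a = x.a-y.a := rfl
@[simp] lemma sub_b (x y : TT) : (x-y).b = x.b-y.b := rfl
@[simp] lemma sub_c (x y : TT) : (x-y).c = x.c-y.c := rfl
@[simp] lemma zero_a : (0:TT).a = 0 := rfl
@[simp] lemma zero_b : (0:TT).b = 0 := rfl
@[simp] lemma zero_c : (0:TT).c = 0 := rfl
@[simp] lemma one_a : (1:TT).a = 1 := rfl
@[simp] lemma one_b : (1:TT).b = 0 := rfl
@[simp] lemma one_c : (1:TT).c = 0 := rfl
instance : CommRing TT where
  add_assoc := by intros; ext <;> simp <;> ring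
  zero_add := by intros; ext <;> simp
  add_zero := by intros; ext <;> simp
  add_comm := by intros; ext <;> simp <;> ring
  left_distrib := by intros; ext <;> simp <;> ring
  right_distrib := by intros; ext <;> simp <;> ring
  zero_mul := by intros; ext <;> simp
  mul_zero := by intros; ext <;> simp
  mul_assoc := by intros; ext <;> simp <;> ring
  one_mul := by intros; ext <;> simp
  mul_one := by intros; ext <;> simp
  neg_add_cancel := by intros; ext <;> simp
  mul_comm := by intros; ext <;> simp <;> ring
  sub_eq_add_neg := by intros; ext <;> simp <;> ring
  nsmul := fun n x => ⟨n * x.a, n * x.b, n * x.c⟩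
  nsmul_zero := by intros; ext <;> show ((0:ℕ):ℤ) * _ = 0 <;> simp
  nsmul_succ := by intros; ext <;> show (((_ + 1 : ℕ)):ℤ) * _ = _ * _ + _ <;> simp <;> ring
  zsmul := fun n x => ⟨n * x.a, n * x.b, n * x.c⟩
  zsmul_zero' := by intros; ext <;> show (0:ℤ) * _ = 0 <;> simp
  zsmul_succ' := by intros; ext <;> show ((Nat.succ _ : ℕ):ℤ) * _ = _ * _ + _ <;> simp <;> ring
  zsmul_neg' := by intros; ext <;> show Int.negSucc _ * _ = -(_ * _) <;> simp [Int.negSucc_eq] <;> ring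
end TT
end TTring

---------------- matrices ----------------
open Matrix
abbrev M3 := Matrix (Fin 3) (Fin 3) TT
abbrev G2 := M3ˣ

def m1 : M3 := !![⟨0,-1,0⟩,⟨1,1,0⟩,0; 1,0,0; 0,0,1]
def m1i : M3 := !![0,1,0; ⟨1,-1,1⟩,⟨0,1,-1⟩,0; 0,0,1]
def m2 : M3 := !![1,0,0; 0,⟨0,-1,0⟩,⟨1,1,0⟩; 0,1,0]
def m2i : M3 := !![1,0,0; 0,0,1; 0,⟨1,-1,1⟩,⟨0,1,-1⟩]
def u1 : G2 := ⟨m1, m1i, by decide, by decide⟩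
def u2 : G2 := ⟨m2, m2i, by decide, by decide⟩

lemma braid_u : u1 * u2 * u1 = u2 * u1 * u2 := by
  apply Units.ext
  show m1 * m2 * m1 = m2 * m1 * m2
  decide

def rho2 : B3 →* G2 :=
  PresentedGroup.toGroup (f := ![u1, u2]) (by
    intro r hr
    rcases hr with rfl
    simp only [_root_.map_mul, _root_.map_inv, FreeGroup.lift_apply_of]
    rw [show (![u1, u2] : Fin 2 → G2) 0 = u1 from rfl, show (![u1, u2] : Fin 2 → G2) 1 = u2
      from rfl, mul_inv_eq_one, braid_u])

@[simp] lemma rho2_s1 : rho2 s1 = u1 := PresentedGroup.toGroup.of _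
@[simp] lemma rho2_s2 : rho2 s2 = u2 := PresentedGroup.toGroup.of _

-- ideal predicates
def MQ1 (M : M3) : Prop := ∀ i j, (M i j).a = 0
def MQ2 (M : M3) : Prop := ∀ i j, (M i j).a = 0 ∧ (M i j).b = 0

instance (M : M3) : Decidable (MQ1 M) := by unfold MQ1; infer_instance
instance (M : M3) : Decidable (MQ2 M) := by unfold MQ2; infer_instance

lemma MQ2.toMQ1 {M : M3} (h : MQ2 M) : MQ1 M := fun i j => (h i j).1

lemma MQ1.add {M N : M3} (hM : MQ1 M) (hN : MQ1 N) : MQ1 (M + N) := by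
  intro i j; simp [Matrix.add_apply, hM i j, hN i j]
lemma MQ1.neg {M : M3} (hM : MQ1 M) : MQ1 (-M) := by
  intro i j; simp [Matrix.neg_apply, hM i j]
lemma MQ1.mul_left (A : M3) {B : M3} (hB : MQ1 B) : MQ1 (A * B) := by
  intro i j
  rw [Matrix.mul_apply, Fin.sum_univ_three]
  simp [hB _ j]
lemma MQ2.add {M N : M3} (hM : MQ2 M) (hN : MQ2 N) : MQ2 (M + N) := by
  intro i j
  simp [Matrix.add_apply, (hM i j).1, (hN i j).1, (hM i j).2, (hN i j).2]
lemma MQ2.neg {M : M3} (hM : MQ2 M) : MQ2 (-M) := by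
  intro i j; simp [Matrix.neg_apply, (hM i j).1, (hM i j).2]
lemma MQ2.sub {M N : M3} (hM : MQ2 M) (hN : MQ2 N) : MQ2 (M - N) := by
  rw [sub_eq_add_neg]; exact hM.add hN.neg
lemma MQ2.mul_left (A : M3) {B : M3} (hB : MQ2 B) : MQ2 (A * B) := by
  intro i j
  rw [Matrix.mul_apply, Fin.sum_univ_three]
  constructor <;> simp [(hB _ j).1, (hB _ j).2]
lemma MQ1.mul {M N : M3} (hM : MQ1 M) (hN : MQ1 N) : MQ2 (M * N) := by
  intro i j
  rw [Matrix.mul_apply, Fin.sum_univ_three]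
  constructor <;> simp [hM i, hN _ j]
lemma MQ1.mul_mq2 {M N : M3} (hM : MQ1 M) (hN : MQ2 N) : M * N = 0 := by
  ext i j <;> rw [Matrix.mul_apply, Fin.sum_univ_three, Matrix.zero_apply] <;>
    simp [hM i, (hN _ j).1, (hN _ j).2]
lemma MQ2.mul_mq1 {M N : M3} (hM : MQ2 M) (hN : MQ1 N) : M * N = 0 := by
  ext i j <;> rw [Matrix.mul_apply, Fin.sum_univ_three, Matrix.zero_apply] <;>
    simp [(hM i _).1, (hM i _).2, hN _ j]

-- subgroups
def U1 : Subgroup G2 where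
  carrier := {u | MQ1 ((u : M3) - 1)}
  one_mem' := by intro i j; simp
  mul_mem' := by
    intro u v hu hv
    have key : ((u*v : G2) : M3) - 1 = ((u:M3) - 1) * ((v:M3) - 1) + (((u:M3) - 1) + ((v:M3) - 1)) := by
      push_cast
      noncomm_ring
    show MQ1 _
    rw [key]
    exact ((MQ1.mul hu hv).toMQ1).add (hu.add hv)
  inv_mem' := by
    intro u hu
    show MQ1 _
    have key : ((u⁻¹ : G2) : M3) - 1 = ((u⁻¹ : G2) : M3) * (1 - (u : M3)) := by
      rw [mul_sub, mul_one]
      have : ((u⁻¹ : G2) : M3) * (u : M3) = 1 := by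
        rw [← Units.val_mul, inv_mul_cancel, Units.val_one]
      rw [this]
    rw [key, show (1 - (u : M3)) = -((u : M3) - 1) from by noncomm_ring]
    exact MQ1.mul_left _ hu.neg

def U2 : Subgroup G2 where
  carrier := {u | MQ2 ((u : M3) - 1)}
  one_mem' := by intro i j; simp
  mul_mem' := by
    intro u v hu hv
    have key : ((u*v : G2) : M3) - 1
        = ((u:M3) - 1) * ((v:M3) - 1) + (((u:M3) - 1) + ((v:M3) - 1)) := by
      push_cast; noncomm_ring
    show MQ2 _
    rw [key]
    exact (MQ2.mul_left _ hv).add (MQ2.add hu hv)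
  inv_mem' := by
    intro u hu
    show MQ2 _
    have key : ((u⁻¹ : G2) : M3) - 1 = ((u⁻¹ : G2) : M3) * (1 - (u : M3)) := by
      rw [mul_sub, mul_one]
      have : ((u⁻¹ : G2) : M3) * (u : M3) = 1 := by
        rw [← Units.val_mul, inv_mul_cancel, Units.val_one]
      rw [this]
    rw [key, show (1 - (u : M3)) = -((u : M3) - 1) from by noncomm_ring]
    exact MQ2.mul_left _ hu.neg

lemma U2_le_U1 : U2 ≤ U1 := fun u hu => (hu : MQ2 _).toMQ1

lemma pcomm_eq_one {G : Type*} [Group G] {x y : G} (h : x * y = y * x) : pcomm x y = 1 := by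
  rw [pcomm, mul_assoc, h]
  simp [mul_assoc]

-- the key commutation lemma
lemma conj_comm {x w : G2} (hx : x ∈ U1) (hw : w ∈ U1) :
    pcomm x (w⁻¹ * x * w) = 1 := by
  apply pcomm_eq_one
  apply Units.ext
  show (x : M3) * (((w⁻¹ : G2) : M3) * (x : M3) * (w : M3))
      = (((w⁻¹ : G2) : M3) * (x : M3) * (w : M3)) * (x : M3)
  set X : M3 := (x : M3) with hX
  set W : M3 := (w : M3) with hW
  set Wi : M3 := ((w⁻¹ : G2) : M3) with hWi
  have hWiW : Wi * W = 1 := by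
    rw [hWi, hW, ← Units.val_mul, inv_mul_cancel, Units.val_one]
  have hxq : MQ1 (X - 1) := hx
  have hwq : MQ1 (W - 1) := hw
  set D : M3 := Wi * X * W - X with hD
  have hDq : MQ2 D := by
    have h0 : D = Wi * ((X - 1) * (W - 1) - (W - 1) * (X - 1)) := by
      have h1 : (X - 1) * (W - 1) - (W - 1) * (X - 1) = X * W - W * X := by noncomm_ring
      rw [h1, hD, mul_sub, ← mul_assoc, ← mul_assoc, hWiW, one_mul]
    rw [h0]
    exact MQ2.mul_left _ ((hxq.mul hwq).sub (hwq.mul hxq))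
  have hXD : X * D = D := by
    have h1 : (X - 1) * D = 0 := hxq.mul_mq2 hDq
    have h2 : (X - 1) * D = X * D - D := by noncomm_ring
    rw [h2] at h1
    linear_combination (norm := noncomm_ring) h1
  have hDX : D * X = D := by
    have h1 : D * (X - 1) = 0 := hDq.mul_mq1 hxq
    have h2 : D * (X - 1) = D * X - D := by noncomm_ring
    rw [h2] at h1
    linear_combination (norm := noncomm_ring) h1
  have : Wi * X * W = X + D := by rw [hD]; noncomm_ring
  rw [this, mul_add, add_mul, hXD, hDX]

lemma rho2_a13_mem : rho2 a13 ∈ U1 := by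
  have : rho2 a13 = u2 * (u1 * u1) * u2⁻¹ := by
    rw [a13, sq]; simp [_root_.map_mul, _root_.map_inv]
  rw [this]
  show MQ1 _
  decide

lemma rho2_a23_mem : rho2 a23 ∈ U1 := by
  have : rho2 a23 = u2 * u2 := by rw [a23, sq]; simp [_root_.map_mul]
  rw [this]
  show MQ1 _
  decide

lemma map_pcomm {G H : Type*} [Group G] [Group H] (f : G →* H) (x y : G) :
    f (pcomm x y) = pcomm (f x) (f y) := by
  simp [pcomm, _root_.map_mul, _root_.map_inv]

lemma rho2_kills : Subgroup.normalClosure homotopyRels3 ≤ rho2.ker := by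
  apply Subgroup.normalClosure_le_normal
  rintro x ⟨g, hg, hx | hx⟩ <;> subst hx <;> simp only [SetLike.mem_coe, MonoidHom.mem_ker, map_pcomm, _root_.map_mul, _root_.map_inv]
  · have hgmem : rho2 g ∈ U1 := by
      have hle : Subgroup.closure ({a13, a23} : Set B3) ≤ U1.comap rho2 := by
        rw [Subgroup.closure_le]
        rintro y (rfl | rfl)
        exacts [rho2_a13_mem, rho2_a23_mem]
      exact hle hg
    exact conj_comm rho2_a13_mem hgmem
  · have hgmem : rho2 g ∈ U1 := by
      have hle : Subgroup.closure ({a13, a23} : Set B3) ≤ U1.comap rho2 := by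
        rw [Subgroup.closure_le]
        rintro y (rfl | rfl)
        exacts [rho2_a13_mem, rho2_a23_mem]
      exact hle hg
    exact conj_comm rho2_a23_mem hgmem

def rhoh : HB3 →* G2 := QuotientGroup.lift _ rho2 rho2_kills

lemma rhoh_pr (x : B3) : rhoh (pr x) = rho2 x := rfl

---------------- generic Heisenberg lemmas ----------------
section Heis
variable {G : Type*} [Group G]

lemma heis_inv_base {u v z : G} (huv : v * u = u * v * z) (hzu : Commute z u) :
    v * u⁻¹ = u⁻¹ * v * z⁻¹ := by
  have h1 : u⁻¹ * (v * u) * u⁻¹ = u⁻¹ * (u * v * z) * u⁻¹ := by rw [huv]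
  simp only [mul_assoc, mul_inv_cancel, mul_one, inv_mul_cancel_left] at h1
  rw [(hzu.inv_right).eq] at h1
  rw [h1]
  simp [mul_assoc]

lemma heisA {u v z : G} (huv : v * u = u * v * z) (hzu : Commute z u) :
    ∀ k : ℤ, v * u ^ k = u ^ k * v * z ^ k := by
  intro k
  induction k using Int.induction_on with
  | zero => simp
  | succ i ih =>
      calc v * u ^ ((i:ℤ) + 1) = v * u ^ (i:ℤ) * u := by
            rw [_root_.zpow_add_one]; simp [mul_assoc]
        _ = u ^ (i:ℤ) * v * z ^ (i:ℤ) * u := by rw [ih]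
        _ = u ^ (i:ℤ) * v * (z ^ (i:ℤ) * u) := by simp [mul_assoc]
        _ = u ^ (i:ℤ) * v * (u * z ^ (i:ℤ)) := by rw [(hzu.zpow_left _).eq]
        _ = u ^ (i:ℤ) * (v * u) * z ^ (i:ℤ) := by simp [mul_assoc]
        _ = u ^ (i:ℤ) * (u * v * z) * z ^ (i:ℤ) := by rw [huv]
        _ = u ^ (i:ℤ) * u * v * (z * z ^ (i:ℤ)) := by simp [mul_assoc]
        _ = u ^ (i:ℤ) * u * v * (z ^ (i:ℤ) * z) := by rw [((Commute.refl z).zpow_right _).eq]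
        _ = u ^ ((i:ℤ) + 1) * v * z ^ ((i:ℤ) + 1) := by
            rw [_root_.zpow_add_one, _root_.zpow_add_one]; try simp [mul_assoc]
  | pred i ih =>
      calc v * u ^ (-(i:ℤ) - 1) = v * u ^ (-(i:ℤ)) * u⁻¹ := by
            rw [_root_.zpow_sub_one]; simp [mul_assoc]
        _ = u ^ (-(i:ℤ)) * v * z ^ (-(i:ℤ)) * u⁻¹ := by rw [ih]
        _ = u ^ (-(i:ℤ)) * v * (z ^ (-(i:ℤ)) * u⁻¹) := by simp [mul_assoc]
        _ = u ^ (-(i:ℤ)) * v * (u⁻¹ * z ^ (-(i:ℤ))) := by rw [(hzu.inv_right.zpow_left _).eq]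
        _ = u ^ (-(i:ℤ)) * (v * u⁻¹) * z ^ (-(i:ℤ)) := by simp [mul_assoc]
        _ = u ^ (-(i:ℤ)) * (u⁻¹ * v * z⁻¹) * z ^ (-(i:ℤ)) := by rw [heis_inv_base huv hzu]
        _ = u ^ (-(i:ℤ)) * u⁻¹ * v * (z⁻¹ * z ^ (-(i:ℤ))) := by simp [mul_assoc]
        _ = u ^ (-(i:ℤ)) * u⁻¹ * v * (z ^ (-(i:ℤ)) * z⁻¹) := by
            rw [((Commute.refl z).inv_left.zpow_right _).eq]
        _ = u ^ (-(i:ℤ) - 1) * v * z ^ (-(i:ℤ) - 1) := by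
            rw [_root_.zpow_sub_one, _root_.zpow_sub_one]; try simp [mul_assoc]

lemma heisA' {u v z : G} (huv : v * u = u * v * z) (hzu : Commute z u) (hzv : Commute z v)
    (k : ℤ) : v⁻¹ * u ^ k = u ^ k * v⁻¹ * z ^ (-k) := by
  have hA := heisA huv hzu k
  have h1 : u ^ k = v⁻¹ * (u ^ k * v * z ^ k) := by
    conv_lhs => rw [← inv_mul_cancel_left v (u ^ k), hA]
  have h2 : u ^ k * (z ^ k)⁻¹ = v⁻¹ * u ^ k * v := by
    conv_lhs => rw [h1]
    simp [mul_assoc]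
  have h3 : u ^ k * (z ^ k)⁻¹ * v⁻¹ = v⁻¹ * u ^ k := by
    rw [h2]; simp [mul_assoc]
  rw [← h3, _root_.zpow_neg]
  calc u ^ k * (z ^ k)⁻¹ * v⁻¹ = u ^ k * ((z ^ k)⁻¹ * v⁻¹) := by simp [mul_assoc]
    _ = u ^ k * (v⁻¹ * (z ^ k)⁻¹) := by rw [((hzv.zpow_left k).inv_left.inv_right).eq]
    _ = u ^ k * v⁻¹ * (z ^ k)⁻¹ := by simp [mul_assoc]

lemma heisB {u v z : G} (huv : v * u = u * v * z) (hzu : Commute z u) (hzv : Commute z v) :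
    ∀ k l : ℤ, v ^ l * u ^ k = u ^ k * v ^ l * z ^ (k * l) := by
  intro k l
  induction l using Int.induction_on with
  | zero => simp
  | succ i ih =>
      calc v ^ ((i:ℤ) + 1) * u ^ k = v ^ (i:ℤ) * (v * u ^ k) := by
            rw [_root_.zpow_add_one]; simp [mul_assoc]
        _ = v ^ (i:ℤ) * (u ^ k * v * z ^ k) := by rw [heisA huv hzu k]
        _ = (v ^ (i:ℤ) * u ^ k) * v * z ^ k := by simp [mul_assoc]
        _ = u ^ k * v ^ (i:ℤ) * z ^ (k * i) * v * z ^ k := by rw [ih]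
        _ = u ^ k * v ^ (i:ℤ) * (z ^ (k * i) * v) * z ^ k := by simp [mul_assoc]
        _ = u ^ k * v ^ (i:ℤ) * (v * z ^ (k * i)) * z ^ k := by rw [(hzv.zpow_left _).eq]
        _ = u ^ k * (v ^ (i:ℤ) * v) * (z ^ (k * i) * z ^ k) := by simp [mul_assoc]
        _ = u ^ k * v ^ ((i:ℤ) + 1) * z ^ (k * ((i:ℤ) + 1)) := by
            rw [← _root_.zpow_add, ← _root_.zpow_add_one,
              show k * ((i:ℤ) + 1) = k * i + k from by ring]
  | pred i ih =>
      calc v ^ (-(i:ℤ) - 1) * u ^ k = v ^ (-(i:ℤ)) * (v⁻¹ * u ^ k) := by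
            rw [_root_.zpow_sub_one]; simp [mul_assoc]
        _ = v ^ (-(i:ℤ)) * (u ^ k * v⁻¹ * z ^ (-k)) := by rw [heisA' huv hzu hzv k]
        _ = (v ^ (-(i:ℤ)) * u ^ k) * v⁻¹ * z ^ (-k) := by simp [mul_assoc]
        _ = u ^ k * v ^ (-(i:ℤ)) * z ^ (k * (-(i:ℤ))) * v⁻¹ * z ^ (-k) := by rw [ih]
        _ = u ^ k * v ^ (-(i:ℤ)) * (z ^ (k * (-(i:ℤ))) * v⁻¹) * z ^ (-k) := by simp [mul_assoc]
        _ = u ^ k * v ^ (-(i:ℤ)) * (v⁻¹ * z ^ (k * (-(i:ℤ)))) * z ^ (-k) := by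
            rw [(hzv.inv_right.zpow_left _).eq]
        _ = u ^ k * (v ^ (-(i:ℤ)) * v⁻¹) * (z ^ (k * (-(i:ℤ))) * z ^ (-k)) := by
            simp [mul_assoc]
        _ = u ^ k * v ^ (-(i:ℤ) - 1) * z ^ (k * (-(i:ℤ) - 1)) := by
            rw [← _root_.zpow_add, ← _root_.zpow_sub_one,
              show k * (-(i:ℤ) - 1) = k * (-(i:ℤ)) + -k from by ring]

lemma heisNF {u v z C : G} (huv : v * u = u * v * z) (hzu : Commute z u) (hzv : Commute z v)
    (hCu : Commute C u) (hCv : Commute C v) (hCz : Commute C z)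
    (k l m d k' l' m' d' : ℤ) :
    (u ^ k * v ^ l * C ^ m * z ^ d) * (u ^ k' * v ^ l' * C ^ m' * z ^ d')
      = u ^ (k + k') * v ^ (l + l') * C ^ (m + m') * z ^ (d + d' + k' * l) := by
  have hzX : Commute (z ^ d) (u ^ k' * v ^ l' * C ^ m') := by
    rw [mul_assoc]
    exact (((hzu.zpow_right k').mul_right ((hzv.zpow_right l').mul_right
      (hCz.symm.zpow_right m'))).zpow_left d)
  have hCX : Commute (C ^ m) (u ^ k' * v ^ l') :=
    (((hCu.zpow_right k').mul_right (hCv.zpow_right l')).zpow_left m)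
  have hzB : Commute (z ^ (k' * l)) (v ^ l') := (hzv.zpow_right l').zpow_left _
  have hzC : Commute (z ^ (k' * l)) (C ^ (m + m')) := (hCz.symm.zpow_right _).zpow_left _
  calc (u ^ k * v ^ l * C ^ m * z ^ d) * (u ^ k' * v ^ l' * C ^ m' * z ^ d')
      = u ^ k * v ^ l * C ^ m * (z ^ d * (u ^ k' * v ^ l' * C ^ m')) * z ^ d' := by
        simp [mul_assoc]
    _ = u ^ k * v ^ l * C ^ m * ((u ^ k' * v ^ l' * C ^ m') * z ^ d) * z ^ d' := by rw [hzX.eq]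
    _ = u ^ k * v ^ l * (C ^ m * (u ^ k' * v ^ l')) * C ^ m' * (z ^ d * z ^ d') := by
        simp [mul_assoc]
    _ = u ^ k * v ^ l * ((u ^ k' * v ^ l') * C ^ m) * C ^ m' * (z ^ d * z ^ d') := by
        rw [hCX.eq]
    _ = u ^ k * (v ^ l * u ^ k') * (v ^ l' * (C ^ m * C ^ m') * (z ^ d * z ^ d')) := by
        simp [mul_assoc]
    _ = u ^ k * (u ^ k' * v ^ l * z ^ (k' * l)) * (v ^ l' * (C ^ m * C ^ m')
          * (z ^ d * z ^ d')) := by rw [heisB huv hzu hzv k' l]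
    _ = (u ^ k * u ^ k') * (v ^ l * ((z ^ (k' * l) * v ^ l') * ((C ^ m * C ^ m')
          * (z ^ d * z ^ d')))) := by simp [mul_assoc]
    _ = (u ^ k * u ^ k') * (v ^ l * ((v ^ l' * z ^ (k' * l)) * ((C ^ m * C ^ m')
          * (z ^ d * z ^ d')))) := by rw [hzB.eq]
    _ = (u ^ k * u ^ k') * ((v ^ l * v ^ l') * ((z ^ (k' * l) * C ^ (m + m'))
          * (z ^ d * z ^ d'))) := by rw [_root_.zpow_add C]; simp [mul_assoc]
    _ = (u ^ k * u ^ k') * ((v ^ l * v ^ l') * ((C ^ (m + m') * z ^ (k' * l))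
          * (z ^ d * z ^ d'))) := by rw [hzC.eq]
    _ = u ^ (k + k') * v ^ (l + l') * C ^ (m + m') * (z ^ (k' * l) * (z ^ d * z ^ d')) := by
        rw [_root_.zpow_add u, _root_.zpow_add v]; simp [mul_assoc]
    _ = u ^ (k + k') * v ^ (l + l') * C ^ (m + m') * z ^ (d + d' + k' * l) := by
        rw [← _root_.zpow_add, ← _root_.zpow_add,
          show k' * l + (d + d') = d + d' + k' * l from by ring]

lemma heisInv {u v z C : G} (huv : v * u = u * v * z) (hzu : Commute z u) (hzv : Commute z v)
    (hCu : Commute C u) (hCv : Commute C v) (hCz : Commute C z) (k l m d : ℤ) :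
    (u ^ k * v ^ l * C ^ m * z ^ d)⁻¹ = u ^ (-k) * v ^ (-l) * C ^ (-m) * z ^ (k * l - d) := by
  apply inv_eq_of_mul_eq_one_right
  rw [heisNF huv hzu hzv hCu hCv hCz]
  rw [show k + -k = 0 from by ring, show l + -l = 0 from by ring,
    show m + -m = 0 from by ring, show d + (k * l - d) + -k * l = 0 from by ring]
  simp

end Heis

---------------- B3 identities ----------------
lemma brel : s1 * s2 * s1 = s2 * s1 * s2 := by
  have h1 : (PresentedGroup.mk braidRel3) (FreeGroup.of 0 * FreeGroup.of 1 * FreeGroup.of 0 *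
      (FreeGroup.of 1 * FreeGroup.of 0 * FreeGroup.of 1)⁻¹) = 1 :=
    (QuotientGroup.eq_one_iff _).2 (Subgroup.subset_normalClosure rfl)
  simp only [_root_.map_mul, _root_.map_inv] at h1
  have h2 : ∀ i : Fin 2, (PresentedGroup.mk braidRel3) (FreeGroup.of i) = PresentedGroup.of i :=
    fun i => rfl
  rw [h2, h2] at h1
  rw [mul_inv_eq_one] at h1
  exact h1

def Delta : B3 := s1 * s2 * s1
lemma delta_s1 : Delta * s1 = s2 * Delta := by
  calc Delta * s1 = (s1*s2*s1)*s1 := rfl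
    _ = (s2*s1*s2)*s1 := by rw [brel]
    _ = s2*Delta := by rw [Delta]; group
lemma delta_s2 : Delta * s2 = s1 * Delta := by
  rw [Delta]; rw [show s1 * s2 * s1 * s2 = s1 * (s2 * s1 * s2) from by group, ← brel]
def Dsq : B3 := Delta * Delta
lemma dsq_s1 : Commute Dsq s1 := by
  rw [Commute, SemiconjBy, Dsq, mul_assoc, delta_s1, ← mul_assoc, delta_s2]; group
lemma dsq_s2 : Commute Dsq s2 := by
  rw [Commute, SemiconjBy, Dsq, mul_assoc, delta_s2, ← mul_assoc, delta_s1]; group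

lemma dsq_eq : a12 * a13 * a23 = Dsq := by
  have e1 : a12 * a13 * a23 = s1 * (s1 * s2 * s1) * (s1 * s2) := by
    rw [a12, a13, a23, sq]; group
  rw [e1, brel, show s1 * (s2 * s1 * s2) * (s1 * s2) = (s1 * s2 * s1) * (s2 * s1 * s2) from by
    group, ← brel]
  rw [Dsq, Delta]

lemma dsq_a13 : Commute Dsq a13 := by
  rw [a13]
  exact (dsq_s2.mul_right ((dsq_s1.pow_right 2))).mul_right dsq_s2.inv_right
lemma dsq_a23 : Commute Dsq a23 := by
  rw [a23]; exact dsq_s2.pow_right 2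

---------------- HB3 relations ----------------
def Cc : HB3 := pr Dsq

lemma commute_of_pcomm {G : Type*} [Group G] {x y : G} (h : pcomm x y = 1) : x * y = y * x := by
  have h2 := congrArg (fun t => y * x * t) h
  simpa [pcomm, mul_assoc] using h2

lemma hR1 : pcomm b13 (b23⁻¹ * b13 * b23) = 1 := by
  have mem : pcomm a13 (a23⁻¹ * a13 * a23) ∈ Subgroup.normalClosure homotopyRels3 :=
    Subgroup.subset_normalClosure ⟨a23, Subgroup.subset_closure (by simp), Or.inl rfl⟩
  have h1 : pr (pcomm a13 (a23⁻¹ * a13 * a23)) = 1 := (QuotientGroup.eq_one_iff _).2 mem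
  rw [map_pcomm] at h1
  simpa [_root_.map_mul, _root_.map_inv, b13, b23] using h1

lemma hR2 : pcomm b23 (b13⁻¹ * b23 * b13) = 1 := by
  have mem : pcomm a23 (a13⁻¹ * a23 * a13) ∈ Subgroup.normalClosure homotopyRels3 :=
    Subgroup.subset_normalClosure ⟨a13, Subgroup.subset_closure (by simp), Or.inr rfl⟩
  have h1 : pr (pcomm a23 (a13⁻¹ * a23 * a13)) = 1 := (QuotientGroup.eq_one_iff _).2 mem
  rw [map_pcomm] at h1
  simpa [_root_.map_mul, _root_.map_inv, b13, b23] using h1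

lemma hz23 : Commute zz b23 := by
  have h2 : Commute b23 (b13⁻¹ * b23 * b13) := commute_of_pcomm hR2
  have hzeq : zz = b23⁻¹ * (b13⁻¹ * b23 * b13) := by rw [zz, pcomm]; group
  rw [hzeq]
  exact (((Commute.refl b23).inv_right).mul_right h2).symm

lemma hz13 : Commute zz b13 := by
  have h1 : Commute b13 (b23⁻¹ * b13 * b23) := commute_of_pcomm hR1
  have hzeq : zz⁻¹ = b13⁻¹ * (b23⁻¹ * b13 * b23) := by rw [zz, pcomm]; group
  have h3 : Commute b13 zz⁻¹ := by
    rw [hzeq]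
    exact ((Commute.refl b13).inv_right).mul_right h1
  simpa using h3.inv_right.symm

lemma hswap : b23 * b13 = b13 * b23 * zz := by rw [zz, pcomm]; group

lemma hC13 : Commute Cc b13 := dsq_a13.map pr
lemma hC23 : Commute Cc b23 := dsq_a23.map pr
lemma hCzz : Commute Cc zz := by
  rw [zz, pcomm]
  exact ((hC23.inv_right.mul_right hC13.inv_right).mul_right hC23).mul_right hC13

lemma hb12_nf : b12 = b13 ^ (-1:ℤ) * b23 ^ (-1:ℤ) * Cc ^ (1:ℤ) * zz ^ (1:ℤ) := by
  have h1 : b12 * b13 * b23 = Cc := by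
    rw [Cc, ← dsq_eq]
    simp [b12, b13, b23, _root_.map_mul]
  have h2 : b12 = Cc * b23⁻¹ * b13⁻¹ := by
    rw [← h1]; group
  have h3 : b23 ^ (-1:ℤ) * b13 ^ (-1:ℤ) = b13 ^ (-1:ℤ) * b23 ^ (-1:ℤ) * zz ^ (1:ℤ) := by
    have := heisB hswap hz13 hz23 (-1) (-1)
    norm_num at this ⊢
    exact this
  have hc : Commute Cc (b13 ^ (-1:ℤ) * b23 ^ (-1:ℤ)) :=
    (hC13.zpow_right _).mul_right (hC23.zpow_right _)
  calc b12 = Cc * (b23 ^ (-1:ℤ) * b13 ^ (-1:ℤ)) := by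
        rw [h2]; simp [mul_assoc]
    _ = Cc * (b13 ^ (-1:ℤ) * b23 ^ (-1:ℤ) * zz ^ (1:ℤ)) := by rw [h3]
    _ = Cc * (b13 ^ (-1:ℤ) * b23 ^ (-1:ℤ)) * zz ^ (1:ℤ) := by simp [mul_assoc]
    _ = (b13 ^ (-1:ℤ) * b23 ^ (-1:ℤ)) * Cc * zz ^ (1:ℤ) := by rw [hc.eq]
    _ = b13 ^ (-1:ℤ) * b23 ^ (-1:ℤ) * Cc ^ (1:ℤ) * zz ^ (1:ℤ) := by simp

---------------- the normal form subgroup ----------------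
def NF : Subgroup HB3 where
  carrier := {x | ∃ k l m d : ℤ, x = b13 ^ k * b23 ^ l * Cc ^ m * zz ^ d}
  one_mem' := ⟨0, 0, 0, 0, by simp⟩
  mul_mem' := by
    rintro x y ⟨k, l, m, d, rfl⟩ ⟨k', l', m', d', rfl⟩
    exact ⟨k + k', l + l', m + m', d + d' + k' * l,
      heisNF hswap hz13 hz23 hC13 hC23 hCzz k l m d k' l' m' d'⟩
  inv_mem' := by
    rintro x ⟨k, l, m, d, rfl⟩
    exact ⟨-k, -l, -m, k * l - d, heisInv hswap hz13 hz23 hC13 hC23 hCzz k l m d⟩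

lemma normal_form {g : HB3} (hg : g ∈ Subgroup.closure ({b12, b13, b23} : Set HB3)) :
    ∃ k l m d : ℤ, g = b13 ^ k * b23 ^ l * Cc ^ m * zz ^ d := by
  have hle : Subgroup.closure ({b12, b13, b23} : Set HB3) ≤ NF := by
    rw [Subgroup.closure_le]
    rintro x (rfl | rfl | rfl)
    · exact ⟨-1, -1, 1, 1, hb12_nf⟩
    · exact ⟨1, 0, 0, 0, by simp⟩
    · exact ⟨0, 1, 0, 0, by simp⟩
  exact hle hg

---------------- linear and quadratic coefficient homomorphisms ----------------
lemma U1_apply_a {u : G2} (hu : u ∈ U1) (i j : Fin 3) :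
    ((u : M3) i j).a = if i = j then 1 else 0 := by
  have h := (hu : MQ1 ((u : M3) - 1)) i j
  rw [Matrix.sub_apply, TT.sub_a, sub_eq_zero] at h
  rw [h, Matrix.one_apply, apply_ite TT.a, TT.one_a, TT.zero_a]

lemma U2_apply_a {u : G2} (hu : u ∈ U2) (i j : Fin 3) :
    ((u : M3) i j).a = if i = j then 1 else 0 := U1_apply_a (U2_le_U1 hu) i j

lemma U2_apply_b {u : G2} (hu : u ∈ U2) (i j : Fin 3) : ((u : M3) i j).b = 0 := by
  have h := (hu : MQ2 ((u : M3) - 1)) i j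
  have h2 := h.2
  rw [Matrix.sub_apply, TT.sub_b, sub_eq_zero] at h2
  rw [h2, Matrix.one_apply, apply_ite TT.b, TT.one_b, TT.zero_b]
  simp

def linM (x : G2) : Matrix (Fin 3) (Fin 3) ℤ := Matrix.of fun i j => ((x : M3) i j).b
def quadM (x : G2) : Matrix (Fin 3) (Fin 3) ℤ := Matrix.of fun i j => ((x : M3) i j).c

lemma lin_mul {x y : G2} (hx : x ∈ U1) (hy : y ∈ U1) : linM (x * y) = linM x + linM y := by
  ext i j
  simp only [linM, Matrix.of_apply, Matrix.add_apply, Units.val_mul]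
  rw [Matrix.mul_apply, Fin.sum_univ_three]
  simp only [TT.add_b, TT.mul_b]
  rw [U1_apply_a hx i 0, U1_apply_a hx i 1, U1_apply_a hx i 2,
      U1_apply_a hy 0 j, U1_apply_a hy 1 j, U1_apply_a hy 2 j]
  fin_cases i <;> fin_cases j <;> simp <;> omega

lemma quad_mul {x y : G2} (hx : x ∈ U2) (hy : y ∈ U2) : quadM (x * y) = quadM x + quadM y := by
  ext i j
  simp only [quadM, Matrix.of_apply, Matrix.add_apply, Units.val_mul]
  rw [Matrix.mul_apply, Fin.sum_univ_three]
  simp only [TT.add_c, TT.mul_c]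
  rw [U2_apply_a hx i 0, U2_apply_a hx i 1, U2_apply_a hx i 2,
      U2_apply_a hy 0 j, U2_apply_a hy 1 j, U2_apply_a hy 2 j,
      U2_apply_b hx i 0, U2_apply_b hx i 1, U2_apply_b hx i 2,
      U2_apply_b hy 0 j, U2_apply_b hy 1 j, U2_apply_b hy 2 j]
  fin_cases i <;> fin_cases j <;> simp <;> omega

lemma lin_one : linM 1 = 0 := by
  ext i j
  simp [linM, Matrix.one_apply, apply_ite TT.b]

lemma quad_one : quadM 1 = 0 := by
  ext i j
  simp [quadM, Matrix.one_apply, apply_ite TT.c]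

def philin : U1 →* Multiplicative (Matrix (Fin 3) (Fin 3) ℤ) where
  toFun u := Multiplicative.ofAdd (linM u)
  map_one' := by
    simp only [OneMemClass.coe_one, lin_one]
    rfl
  map_mul' u v := by
    simp only [Subgroup.coe_mul]
    rw [lin_mul u.2 v.2]
    rfl

def phiquad : U2 →* Multiplicative (Matrix (Fin 3) (Fin 3) ℤ) where
  toFun u := Multiplicative.ofAdd (quadM u)
  map_one' := by
    simp only [OneMemClass.coe_one, quad_one]
    rfl
  map_mul' u v := by
    simp only [Subgroup.coe_mul]
    rw [quad_mul u.2 v.2]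
    rfl

@[simp] lemma philin_apply (u : U1) : philin u = Multiplicative.ofAdd (linM u) := rfl
@[simp] lemma phiquad_apply (u : U2) : phiquad u = Multiplicative.ofAdd (quadM u) := rfl

---------------- explicit images ----------------
def X13 : G2 := u2 * (u1 * u1) * u2⁻¹
def X23 : G2 := u2 * u2
def XC : G2 := u1 * u2 * u1 * (u1 * u2 * u1)
def XZ : G2 := X23⁻¹ * X13⁻¹ * X23 * X13

lemma rho2_a13_eq : rho2 a13 = X13 := by
  rw [a13, sq]; simp [_root_.map_mul, _root_.map_inv, X13]
lemma rho2_a23_eq : rho2 a23 = X23 := by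
  rw [a23, sq]; simp [_root_.map_mul, X23]
lemma rho2_dsq_eq : rho2 Dsq = XC := by
  rw [Dsq, Delta]; simp [_root_.map_mul, XC]

lemma rhoh_b13 : rhoh b13 = X13 := by
  rw [b13, rhoh_pr, rho2_a13_eq]
lemma rhoh_b23 : rhoh b23 = X23 := by
  rw [b23, rhoh_pr, rho2_a23_eq]
lemma rhoh_Cc : rhoh Cc = XC := by
  rw [Cc, rhoh_pr, rho2_dsq_eq]
lemma rhoh_zz : rhoh zz = XZ := by
  rw [zz, map_pcomm, rhoh_b13, rhoh_b23]
  rfl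

lemma hX13U : X13 ∈ U1 := by show MQ1 _; decide
lemma hX23U : X23 ∈ U1 := by show MQ1 _; decide
lemma hXCU : XC ∈ U1 := by show MQ1 _; decide
lemma hXZ2 : XZ ∈ U2 := by show MQ2 _; decide
lemma hXZU : XZ ∈ U1 := U2_le_U1 hXZ2

def L13 : Matrix (Fin 3) (Fin 3) ℤ := !![1,0,-1; 0,0,0; -1,0,1]
def L23 : Matrix (Fin 3) (Fin 3) ℤ := !![0,0,0; 0,1,-1; 0,-1,1]
def LC : Matrix (Fin 3) (Fin 3) ℤ := !![2,-1,-1; -1,2,-1; -1,-1,2]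
def KZ : Matrix (Fin 3) (Fin 3) ℤ := !![0,-1,1; 1,0,-1; -1,1,0]

lemma lin_X13 : linM X13 = L13 := by decide
lemma lin_X23 : linM X23 = L23 := by decide
lemma lin_XC : linM XC = LC := by decide
lemma lin_XZ : linM XZ = 0 := by decide
lemma quad_XZ : quadM XZ = KZ := by decide


/-- The pure homotopy braid group `P̂₃ = ⟨b₁₂, b₁₃, b₂₃⟩ ≤ B̂₃` is torsion-free. -/
theorem pure_homotopy_braid_group_torsion_free
    (g : HB3) (hg : g ∈ Subgroup.closure ({b12, b13, b23} : Set HB3))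
    (n : ℕ) (hn : 1 ≤ n) (h : g ^ n = 1) : g = 1 := by
  obtain ⟨k, l, m, d, hgnf⟩ := normal_form hg
  have hn0 : ((n : ℤ)) ≠ 0 := Int.natCast_ne_zero.mpr (by omega)
  -- package the image of g as an element of U1
  set y13 : U1 := ⟨X13, hX13U⟩ with hy13
  set y23 : U1 := ⟨X23, hX23U⟩ with hy23
  set yC : U1 := ⟨XC, hXCU⟩ with hyC
  set yZ : U1 := ⟨XZ, hXZU⟩ with hyZ
  set Y : U1 := y13 ^ k * y23 ^ l * yC ^ m * yZ ^ d with hY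
  have hcoe : (Y : G2) = rhoh g := by
    rw [hgnf]
    simp only [hY, Subgroup.coe_mul, SubgroupClass.coe_zpow, hy13, hy23, hyC, hyZ,
      _root_.map_mul, map_zpow, rhoh_b13, rhoh_b23, rhoh_Cc, rhoh_zz]
  have hYn : Y ^ n = 1 := by
    apply Subtype.ext
    rw [SubmonoidClass.coe_pow, hcoe, ← map_pow, h, _root_.map_one, OneMemClass.coe_one]
  have hP := congrArg philin hYn
  rw [map_pow, _root_.map_one] at hP
  have hPval : Multiplicative.toAdd (philin Y) = k • L13 + l • L23 + m • LC + d • (0 : Matrix (Fin 3) (Fin 3) ℤ) := by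
    rw [hY]
    simp only [_root_.map_mul, map_zpow, philin_apply]
    simp only [hy13, hy23, hyC, hyZ, Subgroup.coe_mk, lin_X13, lin_X23, lin_XC, lin_XZ]
    simp [toAdd_mul, toAdd_zpow]
  have hsum : (n : ℤ) • (k • L13 + l • L23 + m • LC + d • (0 : Matrix (Fin 3) (Fin 3) ℤ)) = 0 := by
    have := congrArg Multiplicative.toAdd hP
    rw [toAdd_pow, hPval] at this
    simpa using this
  have h00 := congrFun (congrFun hsum 0) 0
  have h11 := congrFun (congrFun hsum 1) 1
  have h01 := congrFun (congrFun hsum 0) 1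
  simp [L13, L23, LC, Matrix.add_apply, Matrix.smul_apply, smul_eq_mul] at h00 h11 h01
  have e00 : k + m * 2 = 0 := by rcases h00 with h' | h' <;> omega
  have e11 : l + m * 2 = 0 := by rcases h11 with h' | h' <;> omega
  have e01 : m = 0 := by rcases h01 with h' | h' <;> omega
  have hk : k = 0 := by omega
  have hl : l = 0 := by omega
  rw [hk, hl, e01] at hgnf
  simp only [zpow_zero, one_mul] at hgnf
  -- now g = zz ^ d
  have hgn : zz ^ (d * (n : ℤ)) = 1 := by
    rw [_root_.zpow_mul, zpow_natCast, ← hgnf, h]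
  set yZ2 : U2 := ⟨XZ, hXZ2⟩ with hyZ2
  have hq : yZ2 ^ (d * (n : ℤ)) = 1 := by
    apply Subtype.ext
    rw [SubgroupClass.coe_zpow, OneMemClass.coe_one]
    show XZ ^ (d * (n:ℤ)) = 1
    rw [← rhoh_zz, ← map_zpow, hgn, _root_.map_one]
  have hQ := congrArg phiquad hq
  rw [map_zpow, _root_.map_one] at hQ
  have := congrArg Multiplicative.toAdd hQ
  rw [toAdd_zpow] at this
  simp only [phiquad_apply, hyZ2] at this
  rw [show quadM ((⟨XZ, hXZ2⟩ : U2) : G2) = KZ from quad_XZ] at this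
  simp only [toAdd_ofAdd] at this
  have hentry := congrFun (congrFun this 1) 0
  simp [KZ, Matrix.smul_apply, smul_eq_mul] at hentry
  have hd : d = 0 := by rcases hentry with h' | h' <;> omega
  rw [hd] at hgnf
  simpa using hgnf
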